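/- arXiv:0803.3632 — 4 statements merged into one kernel-verified Lean document; each statement's English description precedes it below -/
import Mathlib

section
/- If two line segments [u,v] and [w,x] in the Euclidean plane intersect, each of length at most 1, and both |u,x| > 1 and |v,x| > 1, then |u,w| ≤ 1 and |v,w| ≤ 1. -/
theorem stmt_1 (u v w x : EuclideanSpace ℝ (Fin 2))
    (huv : dist u v ≤ 1) (hwx : dist w x ≤ 1)
    (hint : (segment ℝ u v ∩ segment ℝ w x).Nonempty)
    (hux : 1 < dist u x) (hvx : 1 < dist v x) :
    dist u w ≤ 1 ∧ dist v w ≤ 1 := by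
  obtain ⟨p, hpuv, hpwx⟩ := hint
  have h1 : dist u p + dist p v = dist u v := dist_add_dist_of_mem_segment hpuv
  have h2 : dist w p + dist p x = dist w x := dist_add_dist_of_mem_segment hpwx
  have t1 : dist u x ≤ dist u p + dist p x := dist_triangle u p x
  have t2 : dist v x ≤ dist v p + dist p x := dist_triangle v p x
  have t3 : dist u w ≤ dist u p + dist p w := dist_triangle u p w
  have t4 : dist v w ≤ dist v p + dist p w := dist_triangle v p w
  rw [dist_comm v p] at t2 t4
  rw [dist_comm p w] at t3 t4
  constructor <;> linarith
end

section
/- If two line segments [u,v] and [w,x] in the Euclidean plane intersect and each has length at most 1, then min(|u,x|, |v,x|) ≤ 2/√3. -/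
set_option maxHeartbeats 1000000

theorem stmt_2 (u v w x : EuclideanSpace ℝ (Fin 2))
    (huv : dist u v ≤ 1) (hwx : dist w x ≤ 1)
    (hint : (segment ℝ u v ∩ segment ℝ w x).Nonempty) :
    min (dist u x) (dist v x) ≤ 2 / Real.sqrt 3 := by
  obtain ⟨p, hpu, hpw⟩ := hint
  obtain ⟨a, b, ha, hb, hab, hP⟩ := hpu
  obtain ⟨c, s, hc, hs, hcs, hQ⟩ := hpw
  set d : EuclideanSpace ℝ (Fin 2) := u - v with hd
  set g : EuclideanSpace ℝ (Fin 2) := x - p with hg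
  have ha' : a = 1 - b := by linarith
  have hs' : s = 1 - c := by linarith
  have hux : u - x = b • d - g := by
    rw [hg, ← hP, hd, ha']; module
  have hvx : v - x = -(a • d + g) := by
    rw [hg, ← hP, hd, ha']; module
  have hgd : g = c • (x - w) := by
    rw [hg, ← hQ, hs']; module
  have hgn : ‖g‖ ≤ 1 := by
    rw [hgd, norm_smul, Real.norm_eq_abs, abs_of_nonneg hc]
    have : ‖x - w‖ = dist w x := by rw [dist_comm, dist_eq_norm]
    have hc1 : c ≤ 1 := by linarith
    nlinarith [norm_nonneg (x - w)]
  have hdn : ‖d‖ ≤ 1 := by rw [hd, ← dist_eq_norm]; exact huv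
  set D := ‖d‖ ^ 2 with hD
  set G := ‖g‖ ^ 2 with hG
  set I : ℝ := inner ℝ d g with hI
  have hA : dist u x ^ 2 = b ^ 2 * D - 2 * b * I + G := by
    rw [dist_eq_norm, hux, @norm_sub_sq_real, norm_smul, real_inner_smul_left,
      Real.norm_eq_abs, abs_of_nonneg hb]
    ring
  have hB : dist v x ^ 2 = a ^ 2 * D + 2 * a * I + G := by
    rw [dist_eq_norm, hvx, norm_neg, @norm_add_sq_real, norm_smul, real_inner_smul_left,
      Real.norm_eq_abs, abs_of_nonneg ha]
    ring
  have hD1 : D ≤ 1 := by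
    have := norm_nonneg d; nlinarith
  have hG1 : G ≤ 1 := by
    have := norm_nonneg g; nlinarith
  have hD0 : 0 ≤ D := sq_nonneg _
  -- key: min of the squared distances is at most G + a*b*D ≤ 1 + 1/4
  have hab4 : a * b * D ≤ 1 / 4 := by nlinarith [mul_nonneg ha hb, sq_nonneg (a - b)]
  have hmin : dist u x ^ 2 ≤ 4 / 3 ∨ dist v x ^ 2 ≤ 4 / 3 := by
    rcases le_or_gt ((b - a) * D - 2 * I) 0 with hE | hE
    · left; rw [hA]
      have h1 : b * ((b - a) * D - 2 * I) ≤ 0 := mul_nonpos_of_nonneg_of_nonpos hb hE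
      nlinarith [h1]
    · right; rw [hB]
      have h1 : a * ((b - a) * D - 2 * I) ≥ 0 := mul_nonneg ha hE.le
      nlinarith [h1]
  have hs3 : Real.sqrt 3 > 0 := Real.sqrt_pos.mpr (by norm_num)
  have hs3sq : Real.sqrt 3 ^ 2 = 3 := Real.sq_sqrt (by norm_num)
  have key : ∀ y : ℝ, 0 ≤ y → y ^ 2 ≤ 4 / 3 → y ≤ 2 / Real.sqrt 3 := by
    intro y hy hy2
    rw [le_div_iff₀ hs3]
    nlinarith
  rcases hmin with h | h
  · exact le_trans (min_le_left _ _) (key _ dist_nonneg h)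
  · exact le_trans (min_le_right _ _) (key _ dist_nonneg h)
end

section
/- Let G be a unit-disk graph and define N(u) to contain every edge (w,x) of G such that |u,w| ≤ 1 and |u,x| ≤ 2/√3 (together with the edges (u,w) for such w). Then the resulting neighborhood relation is 2-intersection semi-closed. -/
open scoped RealInnerProductSpace

/-- Edge relation of the unit-disk graph on vertex set `V`. -/
def UnitDiskEdge (V : Set (EuclideanSpace ℝ (Fin 2)))
    (a b : EuclideanSpace ℝ (Fin 2)) : Prop :=
  a ∈ V ∧ b ∈ V ∧ a ≠ b ∧ dist a b ≤ 1

/-- The edge `(a,b)` belongs to the neighborhood `N(u)`: either it is an edge `(w,x)`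
with `|u,w| ≤ 1` and `|u,x| ≤ 2/√3` (in some orientation), or an edge incident to `u`
whose other endpoint is within distance `1` of `u`. -/
def NbrEdge (V : Set (EuclideanSpace ℝ (Fin 2)))
    (u a b : EuclideanSpace ℝ (Fin 2)) : Prop :=
  UnitDiskEdge V a b ∧
    ((dist u a ≤ 1 ∧ dist u b ≤ 2 / Real.sqrt 3) ∨
     (dist u b ≤ 1 ∧ dist u a ≤ 2 / Real.sqrt 3) ∨
     a = u ∨ b = u)

/-- There is a path of at most `d` hops from `a` to `b` using only edges of `N(u)`. -/
def NbrPath (V : Set (EuclideanSpace ℝ (Fin 2)))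
    (u a b : EuclideanSpace ℝ (Fin 2)) (d : ℕ) : Prop :=
  ∃ k ≤ d, ∃ f : ℕ → EuclideanSpace ℝ (Fin 2), f 0 = a ∧ f k = b ∧
    ∀ i < k, NbrEdge V u (f i) (f (i + 1))

/- ### Algebraic core -/
set_option maxHeartbeats 1000000

private lemma hard_case (t s m n q : ℝ) (ht0 : 0 ≤ t) (ht1 : t ≤ 1/2) (hs0 : 0 ≤ s)
    (hs1 : s ≤ 1/2) (hm0 : 0 ≤ m) (hm1 : m ≤ 1) (hn0 : 0 ≤ n) (hn1 : n ≤ 1)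
    (hU : t^2*m^2+(1-s)^2*n^2+2*(t*(1-s))*q > 4/3)
    (hV : (1-t)^2*m^2+(1-s)^2*n^2-2*((1-t)*(1-s))*q > 4/3) : False := by
  have hb : 0 ≤ (1-t)*m := mul_nonneg (by linarith) hm0
  have h1 : (1-t)*m*(4/3) ≤ (1-t)*m*(t^2*m^2+(1-s)^2*n^2+2*(t*(1-s))*q) :=
    mul_le_mul_of_nonneg_left hU.le hb
  have h2 : t*(4/3) ≤ t*((1-t)^2*m^2+(1-s)^2*n^2-2*((1-t)*(1-s))*q) :=
    mul_le_mul_of_nonneg_left hV.le ht0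
  have hD0 : 0 ≤ (1-s)*n := mul_nonneg (by linarith) hn0
  have hD1 : (1-s)*n ≤ 1 := by nlinarith [mul_nonneg hs0 hn0]
  have hD : ((1-s)*n)^2 ≤ 1 := by nlinarith
  have hDn : 0 ≤ (1-t)*m + t := by linarith
  nlinarith [mul_le_mul_of_nonneg_left hD hDn, sq_nonneg (2*t-1),
    mul_nonneg (sub_nonneg.2 hm1) (mul_nonneg (mul_nonneg ht0 (by linarith : (0:ℝ) ≤ 1-t)) hm0),
    mul_nonneg (mul_nonneg ht0 (by linarith : (0:ℝ) ≤ 1-t)) (mul_nonneg hm0 hm0),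
    mul_nonneg (mul_nonneg ht0 (by linarith : (0:ℝ) ≤ 1-t)) hm0]

private lemma core (t s m n q : ℝ) (ht0 : 0 ≤ t) (ht1 : t ≤ 1/2) (hs0 : 0 ≤ s) (hs1 : s ≤ 1/2)
    (hm0 : 0 ≤ m) (hm1 : m ≤ 1) (hn0 : 0 ≤ n) (hn1 : n ≤ 1)
    (hq1 : -(m*n) ≤ q) (hq2 : q ≤ m*n) :
    (t^2*m^2+s^2*n^2-2*(t*s)*q ≤ 1 ∧ t^2*m^2+(1-s)^2*n^2+2*(t*(1-s))*q ≤ 4/3) ∨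
    ((1-t)^2*m^2+s^2*n^2+2*((1-t)*s)*q ≤ 1 ∧
      (1-t)^2*m^2+(1-s)^2*n^2-2*((1-t)*(1-s))*q ≤ 4/3) := by
  have htm : t*m ≤ 1/2 := by nlinarith
  have hsn : s*n ≤ 1/2 := by nlinarith
  have htm0 : 0 ≤ t*m := mul_nonneg ht0 hm0
  have hsn0 : 0 ≤ s*n := mul_nonneg hs0 hn0
  by_cases hU : t^2*m^2+(1-s)^2*n^2+2*(t*(1-s))*q ≤ 4/3
  · left
    refine ⟨?_, hU⟩
    have step1 : t^2*m^2+s^2*n^2-2*(t*s)*q ≤ (t*m+s*n)^2 := by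
      nlinarith [mul_nonneg (mul_nonneg ht0 hs0) (by linarith : 0 ≤ m*n + q)]
    have step2 : (t*m+s*n)^2 ≤ 1 := by nlinarith
    linarith
  · right
    push_neg at hU
    constructor
    · -- (1-t)m + sn < 1 since (tm + (1-s)n)^2 > 4/3 > 1
      have hA0 : 0 ≤ t*m + (1-s)*n := by
        have := mul_nonneg (by linarith : (0:ℝ) ≤ 1-s) hn0
        nlinarith
      have hsq : t^2*m^2+(1-s)^2*n^2+2*(t*(1-s))*q ≤ (t*m+(1-s)*n)^2 := by
        nlinarith [mul_nonneg (mul_nonneg ht0 (by linarith : (0:ℝ) ≤ 1-s)) (by linarith : 0 ≤ m*n - q)]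
      have hA : t*m + (1-s)*n > 1 := by nlinarith [sq_nonneg (t*m + (1-s)*n - 1)]
      have hB : (1-t)*m + s*n < 1 := by linarith
      have hB0 : 0 ≤ (1-t)*m := mul_nonneg (by linarith) hm0
      have step1 : (1-t)^2*m^2+s^2*n^2+2*((1-t)*s)*q ≤ ((1-t)*m+s*n)^2 := by
        nlinarith [mul_nonneg (mul_nonneg (by linarith : (0:ℝ) ≤ 1-t) hs0) (by linarith : 0 ≤ m*n - q)]
      have step2 : ((1-t)*m+s*n)^2 ≤ 1 := by nlinarith [mul_nonneg hs0 hn0]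
      linarith
    · by_contra hV
      push_neg at hV
      exact hard_case t s m n q ht0 ht1 hs0 hs1 hm0 hm1 hn0 hn1 hU hV

private lemma quad (t s m n q : ℝ) (ht0 : 0 ≤ t) (ht1 : t ≤ 1) (hs0 : 0 ≤ s) (hs1 : s ≤ 1)
    (hm0 : 0 ≤ m) (hm1 : m ≤ 1) (hn0 : 0 ≤ n) (hn1 : n ≤ 1)
    (hq1 : -(m*n) ≤ q) (hq2 : q ≤ m*n) :
    (t^2*m^2+s^2*n^2-2*(t*s)*q ≤ 1 ∧ t^2*m^2+(1-s)^2*n^2+2*(t*(1-s))*q ≤ 4/3) ∨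
    (t^2*m^2+(1-s)^2*n^2+2*(t*(1-s))*q ≤ 1 ∧ t^2*m^2+s^2*n^2-2*(t*s)*q ≤ 4/3) ∨
    ((1-t)^2*m^2+s^2*n^2+2*((1-t)*s)*q ≤ 1 ∧
      (1-t)^2*m^2+(1-s)^2*n^2-2*((1-t)*(1-s))*q ≤ 4/3) ∨
    ((1-t)^2*m^2+(1-s)^2*n^2-2*((1-t)*(1-s))*q ≤ 1 ∧
      (1-t)^2*m^2+s^2*n^2+2*((1-t)*s)*q ≤ 4/3) := by
  rcases le_total t (1/2) with ht | ht <;> rcases le_total s (1/2) with hs | hs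
  · rcases core t s m n q ht0 ht hs0 hs hm0 hm1 hn0 hn1 hq1 hq2 with h | h
    · exact Or.inl h
    · exact Or.inr (Or.inr (Or.inl h))
  · rcases core t (1-s) m n (-q) ht0 ht (by linarith) (by linarith) hm0 hm1 hn0 hn1
      (by linarith) (by linarith) with h | h
    · refine Or.inr (Or.inl ?_); constructor <;> linarith [h.1, h.2]
    · refine Or.inr (Or.inr (Or.inr ?_)); constructor <;> linarith [h.1, h.2]
  · rcases core (1-t) s m n (-q) (by linarith) (by linarith) hs0 hs hm0 hm1 hn0 hn1
      (by linarith) (by linarith) with h | h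
    · refine Or.inr (Or.inr (Or.inl ?_)); constructor <;> linarith [h.1, h.2]
    · refine Or.inl ?_; constructor <;> linarith [h.1, h.2]
  · rcases core (1-t) (1-s) m n q (by linarith) (by linarith) (by linarith) (by linarith)
      hm0 hm1 hn0 hn1 hq1 hq2 with h | h
    · refine Or.inr (Or.inr (Or.inr ?_)); constructor <;> linarith [h.1, h.2]
    · refine Or.inr (Or.inl ?_); constructor <;> linarith [h.1, h.2]

/- ### Packaging: from distance bounds to NbrEdge and paths -/

private lemma sqrt3_pos : (0:ℝ) < 2 / Real.sqrt 3 := by positivity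

private lemma one_le_sqrt3 : (1:ℝ) ≤ 2 / Real.sqrt 3 := by
  rw [le_div_iff₀ (by positivity : (0:ℝ) < Real.sqrt 3), one_mul]
  nlinarith [Real.sq_sqrt (by norm_num : (3:ℝ) ≥ 0), Real.sqrt_nonneg 3]

private lemma build (V : Set (EuclideanSpace ℝ (Fin 2)))
    (u w x : EuclideanSpace ℝ (Fin 2)) (hu : u ∈ V) (hwx : UnitDiskEdge V w x)
    (h1 : dist u w ≤ 1) (h2 : dist u x ≤ 2 / Real.sqrt 3) :
    NbrEdge V u w x ∧ NbrPath V u u w 2 ∧ NbrPath V u u x 2 := by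
  obtain ⟨hwV, hxV, hwxne, hwxd⟩ := hwx
  have hedge : NbrEdge V u w x := ⟨⟨hwV, hxV, hwxne, hwxd⟩, Or.inl ⟨h1, h2⟩⟩
  refine ⟨hedge, ?_, ?_⟩
  · by_cases huw : u = w
    · exact ⟨0, by norm_num, fun _ => u, rfl, huw.symm ▸ rfl, by omega⟩
    · refine ⟨1, by norm_num, fun i => if i = 0 then u else w, rfl, rfl, ?_⟩
      intro i hi
      interval_cases i
      simp only [if_pos rfl, if_neg one_ne_zero]
      exact ⟨⟨hu, hwV, huw, h1⟩, Or.inr (Or.inr (Or.inl rfl))⟩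
  · by_cases hux : u = x
    · exact ⟨0, by norm_num, fun _ => u, rfl, hux.symm ▸ rfl, by omega⟩
    · by_cases huw : u = w
      · refine ⟨1, by norm_num, fun i => if i = 0 then u else x, rfl, rfl, ?_⟩
        intro i hi
        interval_cases i
        simp only [if_pos rfl, if_neg one_ne_zero]
        exact ⟨⟨hu, hxV, hux, by rw [huw]; exact hwxd⟩, Or.inr (Or.inr (Or.inl rfl))⟩
      · refine ⟨2, le_refl 2, fun i => if i = 0 then u else if i = 1 then w else x, rfl, rfl, ?_⟩
        intro i hi
        interval_cases i
        · simp only [if_pos rfl, if_neg one_ne_zero]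
          exact ⟨⟨hu, hwV, huw, h1⟩, Or.inr (Or.inr (Or.inl rfl))⟩
        · simp only [if_neg one_ne_zero, if_pos rfl, if_neg (by norm_num : (2:ℕ) ≠ 0),
            if_neg (by norm_num : (2:ℕ) ≠ 1)]
          exact hedge

private lemma udSymm {V : Set (EuclideanSpace ℝ (Fin 2))} {w x : EuclideanSpace ℝ (Fin 2)}
    (h : UnitDiskEdge V w x) : UnitDiskEdge V x w :=
  ⟨h.2.1, h.1, h.2.2.1.symm, by rw [dist_comm]; exact h.2.2.2⟩

private lemma buildSymm (V : Set (EuclideanSpace ℝ (Fin 2)))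
    (u w x : EuclideanSpace ℝ (Fin 2)) (hu : u ∈ V) (hwx : UnitDiskEdge V w x)
    (h1 : dist u x ≤ 1) (h2 : dist u w ≤ 2 / Real.sqrt 3) :
    NbrEdge V u w x ∧ NbrPath V u u w 2 ∧ NbrPath V u u x 2 := by
  obtain ⟨he, p1, p2⟩ := build V u x w hu (udSymm hwx) h1 h2
  exact ⟨⟨hwx, Or.inr (Or.inl ⟨h1, h2⟩)⟩, p2, p1⟩

/- ### Main theorem -/

theorem stmt_8 (V : Set (EuclideanSpace ℝ (Fin 2)))
    (u v w x : EuclideanSpace ℝ (Fin 2))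
    (huv : UnitDiskEdge V u v) (hwx : UnitDiskEdge V w x)
    (hint : (segment ℝ u v ∩ segment ℝ w x).Nonempty) :
    (NbrEdge V u w x ∧ NbrPath V u u w 2 ∧ NbrPath V u u x 2) ∨
    (NbrEdge V v w x ∧ NbrPath V v v w 2 ∧ NbrPath V v v x 2) := by
  obtain ⟨p, hp1, hp2⟩ := hint
  rw [segment_eq_image] at hp1 hp2
  obtain ⟨t, ht, hpt⟩ := hp1
  obtain ⟨s, hs, hps⟩ := hp2
  simp only [Set.mem_Icc] at ht hs
  have hp : (1-t) • u + t • v = (1-s) • w + s • x := by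
    have h := hpt.trans hps.symm
    simpa using h
  set E := v - u with hE
  set F := x - w with hF
  have huw : u - w = s • F - t • E := by
    simp only [hE, hF, smul_sub]
    linear_combination (norm := module) hp
  have hux : u - x = -(t • E) - (1-s) • F := by
    simp only [hE, hF, smul_sub]
    linear_combination (norm := module) hp
  have hvw : v - w = (1-t) • E + s • F := by
    simp only [hE, hF, smul_sub]
    linear_combination (norm := module) hp
  have hvx : v - x = (1-t) • E - (1-s) • F := by
    simp only [hE, hF, smul_sub]
    linear_combination (norm := module) hp
  set m := ‖E‖ with hm
  set n := ‖F‖ with hn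
  set q : ℝ := inner ℝ E F with hq
  have hm1 : m ≤ 1 := by rw [hm, hE, ← dist_eq_norm, dist_comm]; exact huv.2.2.2
  have hn1 : n ≤ 1 := by rw [hn, hF, ← dist_eq_norm, dist_comm]; exact hwx.2.2.2
  have hm0 : 0 ≤ m := norm_nonneg _
  have hn0 : 0 ≤ n := norm_nonneg _
  have hq2 : q ≤ m * n := real_inner_le_norm E F
  have hq1 : -(m*n) ≤ q := by
    have := abs_real_inner_le_norm E F
    rw [abs_le] at this
    linarith [this.1]
  -- squared distances
  have euw : dist u w ^ 2 = t^2*m^2+s^2*n^2-2*(t*s)*q := by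
    rw [dist_eq_norm, huw, norm_sub_sq_real, norm_smul, norm_smul, real_inner_smul_left,
      real_inner_smul_right, real_inner_comm]
    simp only [Real.norm_eq_abs, abs_of_nonneg ht.1, abs_of_nonneg hs.1]
    ring
  have eux : dist u x ^ 2 = t^2*m^2+(1-s)^2*n^2+2*(t*(1-s))*q := by
    rw [dist_eq_norm, hux, sub_eq_add_neg, ← neg_add, norm_neg, norm_add_sq_real, norm_smul,
      norm_smul, real_inner_smul_left, real_inner_smul_right]
    simp only [Real.norm_eq_abs, abs_of_nonneg ht.1, abs_of_nonneg (by linarith [hs.2] : (0:ℝ) ≤ 1-s)]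
    ring
  have evw : dist v w ^ 2 = (1-t)^2*m^2+s^2*n^2+2*((1-t)*s)*q := by
    rw [dist_eq_norm, hvw, norm_add_sq_real, norm_smul, norm_smul, real_inner_smul_left,
      real_inner_smul_right]
    simp only [Real.norm_eq_abs, abs_of_nonneg (by linarith [ht.2] : (0:ℝ) ≤ 1-t), abs_of_nonneg hs.1]
    ring
  have evx : dist v x ^ 2 = (1-t)^2*m^2+(1-s)^2*n^2-2*((1-t)*(1-s))*q := by
    rw [dist_eq_norm, hvx, norm_sub_sq_real, norm_smul, norm_smul, real_inner_smul_left,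
      real_inner_smul_right]
    simp only [Real.norm_eq_abs, abs_of_nonneg (by linarith [ht.2] : (0:ℝ) ≤ 1-t),
      abs_of_nonneg (by linarith [hs.2] : (0:ℝ) ≤ 1-s)]
    ring
  have hsq3 : (2 / Real.sqrt 3) ^ 2 = 4/3 := by
    rw [div_pow, Real.sq_sqrt (by norm_num : (3:ℝ) ≥ 0)]
    norm_num
  have sqle1 : ∀ y z : EuclideanSpace ℝ (Fin 2), dist y z ^ 2 ≤ 1 → dist y z ≤ 1 := by
    intro y z h
    nlinarith [dist_nonneg (x := y) (y := z)]
  have sqle43 : ∀ y z : EuclideanSpace ℝ (Fin 2), dist y z ^ 2 ≤ 4/3 → dist y z ≤ 2 / Real.sqrt 3 := by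
    intro y z h
    nlinarith [dist_nonneg (x := y) (y := z), sqrt3_pos, hsq3]
  rcases quad t s m n q ht.1 ht.2 hs.1 hs.2 hm0 hm1 hn0 hn1 hq1 hq2 with h | h | h | h
  · exact Or.inl (build V u w x huv.1 hwx (sqle1 u w (euw ▸ h.1)) (sqle43 u x (eux ▸ h.2)))
  · exact Or.inl (buildSymm V u w x huv.1 hwx (sqle1 u x (eux ▸ h.1)) (sqle43 u w (euw ▸ h.2)))
  · exact Or.inr (build V v w x huv.2.1 hwx (sqle1 v w (evw ▸ h.1)) (sqle43 v x (evx ▸ h.2)))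
  · exact Or.inr (buildSymm V v w x huv.2.1 hwx (sqle1 v x (evx ▸ h.1)) (sqle43 v w (evw ▸ h.2)))
end

section
/- Let u, v, w, x be points in ℝ² such that segments [u,v] and [w,x] intersect, |u,v| ≤ 1, |w,x| ≤ 1, |u,x| > 1, |v,x| > 1, and |u,x| ≤ |v,x|. Then |u,x| ≤ 2/√3. -/
set_option maxHeartbeats 400000


theorem stmt_13 (u v w x : EuclideanSpace ℝ (Fin 2))
    (hint : (segment ℝ u v ∩ segment ℝ w x).Nonempty)
    (huv : dist u v ≤ 1) (hwx : dist w x ≤ 1)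
    (hux : 1 < dist u x) (hvx : 1 < dist v x)
    (hcloser : dist u x ≤ dist v x) :
    dist u x ≤ 2 / Real.sqrt 3 := by
  obtain ⟨p, hpuv, hpwx⟩ := hint
  -- dist p x ≤ 1
  have hpx : dist p x ≤ 1 := by
    have := dist_add_dist_of_mem_segment hpwx
    have := dist_nonneg (x := w) (y := p)
    linarith
  -- parametrize p on [u,v]
  rw [segment_eq_image'] at hpuv
  obtain ⟨t, ht, rfl⟩ := hpuv
  set y : EuclideanSpace ℝ (Fin 2) := x - u with hy
  set d : EuclideanSpace ℝ (Fin 2) := v - u with hd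
  set S : ℝ := inner ℝ y d with hS
  set A : ℝ := ‖y‖ ^ 2 with hA
  set C : ℝ := ‖d‖ ^ 2 with hC
  have hC1 : C ≤ 1 := by
    have : dist u v = ‖d‖ := by rw [dist_eq_norm, hd, ← norm_neg]; congr 1; abel
    nlinarith [norm_nonneg d]
  have hC0 : 0 ≤ C := sq_nonneg _
  have h2S : 2 * S ≤ C := by
    have h1 : dist u x ^ 2 = A := by
      rw [dist_eq_norm, hA, hy, ← norm_neg]; congr 2; abel
    have h2 : dist v x ^ 2 = A - 2 * S + C := by
      have : x - v = y - d := by rw [hy, hd]; abel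
      rw [dist_eq_norm, ← norm_neg, show -(v - x) = x - v by abel, this, hA, hC, hS,
        norm_sub_sq_real, real_inner_comm]
    nlinarith [dist_nonneg (x := u) (y := x), dist_nonneg (x := v) (y := x)]
  have hkey : A - 2 * t * S + t ^ 2 * C ≤ 1 := by
    have hxp : x - (u + t • d) = y - t • d := by rw [hy]; abel
    have : dist (u + t • d) x ^ 2 = A - 2 * t * S + t ^ 2 * C := by
      rw [dist_eq_norm, ← norm_neg, show -(u + t • d - x) = x - (u + t • d) by abel, hxp,
        norm_sub_sq_real, real_inner_smul_right, norm_smul, real_inner_comm]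
      simp [hA, hC, hS, mul_pow]
      rw [real_inner_comm y d]
      ring
    nlinarith [dist_nonneg (x := u + t • d) (y := x)]
  have hAle : A ≤ 4 / 3 := by
    obtain ⟨ht0, ht1⟩ := ht
    rcases le_or_gt S 0 with hSneg | hSpos
    · nlinarith [mul_nonneg ht0 hC0, mul_nonneg (mul_nonneg ht0 ht0) hC0]
    · have hCpos : 0 < C := by linarith
      nlinarith [sq_nonneg (t * C - S), mul_pos hSpos hSpos, mul_le_mul_of_nonneg_right hkey hC0]
  -- conclude
  have hdA : dist u x ^ 2 = A := by
    rw [dist_eq_norm, hA, hy, ← norm_neg]; congr 2; abel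
  have h3 : (0:ℝ) < Real.sqrt 3 := Real.sqrt_pos.mpr (by norm_num)
  rw [le_div_iff₀ h3]
  have hsq : Real.sqrt 3 ^ 2 = 3 := Real.sq_sqrt (by norm_num)
  have hnn : 0 ≤ dist u x * Real.sqrt 3 := mul_nonneg dist_nonneg h3.le
  nlinarith [sq_nonneg (dist u x * Real.sqrt 3 - 2)]
end
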